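/- Let A = W Λ Wᵀ be an eigendecomposition of an n×n real symmetric positive semidefinite matrix A, where W is orthogonal and Λ = diag(λ_1, …, λ_n) with λ_1 ≥ λ_2 ≥ … ≥ λ_n ≥ 0. Fix integers k ≥ 1 and j ≥ 1 with jk ≤ n, and for i = 1, …, j let W_i ∈ ℝ^{n×k} consist of columns (i−1)k+1 through ik of W. Then for every X ∈ ℝ^{n×k}, σ_min(XᵀA^{1/2}) ≥ ( Σ_{i=1}^{j} λ_{ik} · σ_min(W_iᵀX)² )^{1/2}. -/

import Mathlib

open Matrix

/-- The smallest singular value of a square real matrix: `σ_min(M) = min_{‖x‖=1} ‖Mx‖`. -/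
noncomputable def sigmaMin {n : ℕ} (M : Matrix (Fin n) (Fin n) ℝ) : ℝ :=
  ⨅ x : Metric.sphere (0 : EuclideanSpace ℝ (Fin n)) 1,
    ‖Matrix.toEuclideanLin M (x : EuclideanSpace ℝ (Fin n))‖

/-- For a `k × n` matrix `M` with `k ≤ n`, the smallest of the `k` singular values
of `M`: `σ_min(M) = min_{‖u‖=1} ‖Mᵀ u‖`. -/
noncomputable def sigmaLast {k n : ℕ} (M : Matrix (Fin k) (Fin n) ℝ) : ℝ :=
  ⨅ u : Metric.sphere (0 : EuclideanSpace ℝ (Fin k)) 1,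
    ‖Matrix.toEuclideanLin Mᵀ (u : EuclideanSpace ℝ (Fin k))‖

/-- The positive semidefinite square root of a positive semidefinite matrix, as
`Matrix.PosSemidef.sqrt` was defined in the older Mathlib. -/
noncomputable def Matrix.PosSemidef.sqrt {n : ℕ} {A : Matrix (Fin n) (Fin n) ℝ}
    (hA : A.PosSemidef) : Matrix (Fin n) (Fin n) ℝ :=
  (hA.1.eigenvectorUnitary : Matrix (Fin n) (Fin n) ℝ) *
    diagonal ((↑) ∘ (√·) ∘ hA.1.eigenvalues) *
    (star (hA.1.eigenvectorUnitary : Matrix (Fin n) (Fin n) ℝ))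

private lemma normsq_toEuclideanLin {a b : ℕ} (M : Matrix (Fin a) (Fin b) ℝ)
    (u : EuclideanSpace ℝ (Fin b)) :
    ‖Matrix.toEuclideanLin M u‖ ^ 2 = ∑ t, ((M *ᵥ (WithLp.equiv 2 _ u)) t) ^ 2 := by
  rw [EuclideanSpace.norm_eq, Real.sq_sqrt (by positivity)]
  congr 1
  ext t
  rw [Matrix.toEuclideanLin_apply]
  simp [Real.norm_eq_abs, sq_abs]

private lemma sigmaMin_nonneg {n : ℕ} (M : Matrix (Fin n) (Fin n) ℝ) : 0 ≤ sigmaMin M :=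
  Real.iInf_nonneg fun _ => norm_nonneg _

private lemma sigmaMin_le {n : ℕ} (M : Matrix (Fin n) (Fin n) ℝ)
    (u : Metric.sphere (0 : EuclideanSpace ℝ (Fin n)) 1) :
    sigmaMin M ≤ ‖Matrix.toEuclideanLin M (u : EuclideanSpace ℝ (Fin n))‖ :=
  ciInf_le ⟨0, by rintro y ⟨x, rfl⟩; exact norm_nonneg _⟩ u

private lemma psd_sqrt_transpose {n : ℕ} {A : Matrix (Fin n) (Fin n) ℝ}
    (hA : A.PosSemidef) : hA.sqrtᵀ = hA.sqrt := by
  simp only [Matrix.PosSemidef.sqrt, Matrix.transpose_mul, Matrix.diagonal_transpose,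
    Matrix.star_eq_conjTranspose, Matrix.conjTranspose_eq_transpose_of_trivial,
    Matrix.transpose_transpose, Matrix.mul_assoc]

private lemma psd_sqrt_mul_self {n : ℕ} {A : Matrix (Fin n) (Fin n) ℝ}
    (hA : A.PosSemidef) : hA.sqrt * hA.sqrt = A := by
  have hU : star (hA.1.eigenvectorUnitary : Matrix (Fin n) (Fin n) ℝ) *
      (hA.1.eigenvectorUnitary : Matrix (Fin n) (Fin n) ℝ) = 1 :=
    Unitary.star_mul_self_of_mem hA.1.eigenvectorUnitary.2
  unfold Matrix.PosSemidef.sqrt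
  simp only [Matrix.mul_assoc]
  rw [← Matrix.mul_assoc (star _) _, hU, Matrix.one_mul, ← Matrix.mul_assoc (diagonal _),
    Matrix.diagonal_mul_diagonal]
  conv_rhs => rw [hA.1.spectral_theorem, Unitary.conjStarAlgAut_apply]
  rw [Matrix.mul_assoc]
  congr 3
  funext i
  simp [Real.mul_self_sqrt (hA.eigenvalues_nonneg i)]


set_option maxHeartbeats 1000000 in
/-- Let `A = W Λ Wᵀ` with `W` orthogonal and `Λ = diag(λ_1,…,λ_n)`,
`λ_1 ≥ … ≥ λ_n ≥ 0`. For `1 ≤ i ≤ j` (with `jk ≤ n`), let `W_i ∈ ℝ^{n×k}` consist of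
columns `(i−1)k+1, …, ik` of `W`. Then for every `X ∈ ℝ^{n×k}`,
`σ_min(XᵀA^{1/2}) ≥ (Σ_{i=1}^{j} λ_{ik} σ_min(W_iᵀX)²)^{1/2}`. -/
theorem stmt3 {n k j : ℕ} (hk : 1 ≤ k) (hj : 1 ≤ j) (hjk : j * k ≤ n)
    (A : Matrix (Fin n) (Fin n) ℝ) (hA : A.PosSemidef)
    (lam : Fin n → ℝ) (hlam : Antitone lam) (hlam0 : ∀ i, 0 ≤ lam i)
    (W : Matrix (Fin n) (Fin n) ℝ) (hW : Wᵀ * W = 1)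
    (hAeig : A = W * Matrix.diagonal lam * Wᵀ)
    (Wsub : Fin j → Matrix (Fin n) (Fin k) ℝ)
    (hWsub : ∀ (i : Fin j) (t : Fin n) (s : Fin k) (h : i.val * k + s.val < n),
      Wsub i t s = W t ⟨i.val * k + s.val, h⟩)
    (X : Matrix (Fin n) (Fin k) ℝ) :
    Real.sqrt (∑ i : Fin j,
        lam ⟨i.val * k + (k - 1), by
            have h0 : i.val + 1 ≤ j := i.isLt
            have h1 : (i.val + 1) * k ≤ j * k := Nat.mul_le_mul_right k h0
            have h2 : (i.val + 1) * k = i.val * k + k := by ring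
            omega⟩ *
          (sigmaMin ((Wsub i)ᵀ * X)) ^ 2) ≤
      sigmaLast (Xᵀ * hA.sqrt) := by
  -- index embedding
  have hlt : ∀ (i : Fin j) (s : ℕ), s < k → i.val * k + s < n := by
    intro i s hs
    have h0 : i.val + 1 ≤ j := i.isLt
    have h1 : (i.val + 1) * k ≤ j * k := Nat.mul_le_mul_right k h0
    have h2 : (i.val + 1) * k = i.val * k + k := by ring
    omega
  set e : Fin j → Fin k → Fin n := fun i s => ⟨i.val * k + s.val, hlt i s s.isLt⟩ with he
  have hEinj : Function.Injective (fun p : Fin j × Fin k => e p.1 p.2) := by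
    rintro ⟨i1, s1⟩ ⟨i2, s2⟩ hps
    simp only [he, Fin.mk.injEq] at hps
    have hk0 : 0 < k := hk
    have hd : (s1.val + i1.val * k) / k = (s2.val + i2.val * k) / k := by
      rw [Nat.add_comm (i1.val * k) s1.val, Nat.add_comm (i2.val * k) s2.val] at hps
      rw [hps]
    rw [Nat.add_mul_div_right _ _ hk0, Nat.add_mul_div_right _ _ hk0,
      Nat.div_eq_of_lt s1.isLt, Nat.div_eq_of_lt s2.isLt] at hd
    have hi : i1 = i2 := Fin.ext (by omega)
    subst hi
    have : s1.val = s2.val := by omega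
    exact Prod.ext rfl (Fin.ext this)
  have hsqrtT : hA.sqrtᵀ = hA.sqrt := by
    exact psd_sqrt_transpose hA
  rw [sigmaLast]
  have hsph : Nonempty (Metric.sphere (0 : EuclideanSpace ℝ (Fin k)) 1) :=
    ⟨⟨EuclideanSpace.single ⟨0, hk⟩ (1 : ℝ), by
      simp [mem_sphere_zero_iff_norm, EuclideanSpace.norm_single]⟩⟩
  apply le_ciInf
  intro u
  set uf : Fin k → ℝ := WithLp.equiv 2 _ (u : EuclideanSpace ℝ (Fin k)) with huf
  set v : Fin n → ℝ := X *ᵥ uf with hv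
  set w : Fin n → ℝ := Wᵀ *ᵥ v with hw
  -- squared norm of the RHS
  have hRHS : ‖Matrix.toEuclideanLin (Xᵀ * hA.sqrt)ᵀ (u : EuclideanSpace ℝ (Fin k))‖ ^ 2
      = ∑ c, lam c * (w c) ^ 2 := by
    rw [normsq_toEuclideanLin]
    have h1 : (Xᵀ * hA.sqrt)ᵀ *ᵥ uf = hA.sqrt *ᵥ v := by
      rw [Matrix.transpose_mul, Matrix.transpose_transpose, hsqrtT, ← Matrix.mulVec_mulVec, hv]
    rw [h1]
    have h2 : ∑ t, ((hA.sqrt *ᵥ v) t) ^ 2 = (hA.sqrt *ᵥ v) ⬝ᵥ (hA.sqrt *ᵥ v) := by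
      simp [dotProduct, sq]
    have h3 : (hA.sqrt *ᵥ v) ⬝ᵥ (hA.sqrt *ᵥ v) = v ⬝ᵥ (A *ᵥ v) := by
      rw [dotProduct_mulVec, ← Matrix.mulVec_transpose, Matrix.mulVec_mulVec,
        hsqrtT, psd_sqrt_mul_self hA, dotProduct_comm]
    have h4 : v ⬝ᵥ (A *ᵥ v) = w ⬝ᵥ (Matrix.diagonal lam *ᵥ w) := by
      rw [hAeig, Matrix.mul_assoc, ← Matrix.mulVec_mulVec, dotProduct_mulVec,
        ← Matrix.mulVec_transpose, ← Matrix.mulVec_mulVec, hw]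
    have h5 : w ⬝ᵥ (Matrix.diagonal lam *ᵥ w) = ∑ c, lam c * (w c) ^ 2 := by
      simp only [dotProduct, Matrix.mulVec_diagonal, sq]
      exact Finset.sum_congr rfl fun x _ => by ring
    rw [h2, h3, h4, h5]
  -- per-block computation: entries of (Wsub i)ᵀ * X applied to uf
  have hblock : ∀ (i : Fin j) (s : Fin k), (((Wsub i)ᵀ * X) *ᵥ uf) s = w (e i s) := by
    intro i s
    rw [← Matrix.mulVec_mulVec, ← hv, hw]
    simp only [Matrix.mulVec, dotProduct, Matrix.transpose_apply]
    exact Finset.sum_congr rfl fun t _ => by rw [hWsub i t s (hlt i s s.isLt)]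
  -- main inequality on squared quantities
  have hmain : (∑ i : Fin j,
      lam ⟨i.val * k + (k - 1), hlt i (k-1) (by omega)⟩ * (sigmaMin ((Wsub i)ᵀ * X)) ^ 2)
      ≤ ∑ c, lam c * (w c) ^ 2 := by
    have step1 : ∀ i : Fin j,
        lam ⟨i.val * k + (k - 1), hlt i (k-1) (by omega)⟩ * (sigmaMin ((Wsub i)ᵀ * X)) ^ 2
        ≤ ∑ s : Fin k, lam (e i s) * (w (e i s)) ^ 2 := by
      intro i
      set lk : ℝ := lam ⟨i.val * k + (k - 1), hlt i (k-1) (by omega)⟩ with hlk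
      have hσ : (sigmaMin ((Wsub i)ᵀ * X)) ^ 2
          ≤ ‖Matrix.toEuclideanLin ((Wsub i)ᵀ * X) (u : EuclideanSpace ℝ (Fin k))‖ ^ 2 :=
        pow_le_pow_left₀ (sigmaMin_nonneg _) (sigmaMin_le _ u) 2
      have hnorm : ‖Matrix.toEuclideanLin ((Wsub i)ᵀ * X) (u : EuclideanSpace ℝ (Fin k))‖ ^ 2
          = ∑ s : Fin k, (w (e i s)) ^ 2 := by
        rw [normsq_toEuclideanLin]
        exact Finset.sum_congr rfl fun s _ => by rw [hblock i s]
      calc lk * (sigmaMin ((Wsub i)ᵀ * X)) ^ 2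
          ≤ lk * ∑ s : Fin k, (w (e i s)) ^ 2 := by
            apply mul_le_mul_of_nonneg_left _ (hlam0 _)
            rw [← hnorm]; exact hσ
        _ = ∑ s : Fin k, lk * (w (e i s)) ^ 2 := Finset.mul_sum _ _ _
        _ ≤ ∑ s : Fin k, lam (e i s) * (w (e i s)) ^ 2 := by
            apply Finset.sum_le_sum
            intro s _
            apply mul_le_mul_of_nonneg_right _ (sq_nonneg _)
            apply hlam
            show (e i s).val ≤ i.val * k + (k - 1)
            have := s.isLt
            simp only [he]
            omega
    calc (∑ i : Fin j,
        lam ⟨i.val * k + (k - 1), hlt i (k-1) (by omega)⟩ * (sigmaMin ((Wsub i)ᵀ * X)) ^ 2)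
        ≤ ∑ i : Fin j, ∑ s : Fin k, lam (e i s) * (w (e i s)) ^ 2 :=
          Finset.sum_le_sum fun i _ => step1 i
      _ = ∑ p : Fin j × Fin k, lam (e p.1 p.2) * (w (e p.1 p.2)) ^ 2 :=
          (Fintype.sum_prod_type
            (f := fun p : Fin j × Fin k => lam (e p.1 p.2) * (w (e p.1 p.2)) ^ 2)).symm
      _ = ∑ c ∈ Finset.univ.image (fun p : Fin j × Fin k => e p.1 p.2),
            lam c * (w c) ^ 2 :=
          by rw [Finset.sum_image (fun p _ q _ hpq => hEinj hpq)]
      _ ≤ ∑ c, lam c * (w c) ^ 2 :=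
          Finset.sum_le_sum_of_subset_of_nonneg (Finset.subset_univ _)
            (fun c _ _ => mul_nonneg (hlam0 c) (sq_nonneg _))
  calc Real.sqrt (∑ i : Fin j, lam ⟨i.val * k + (k - 1), hlt i (k-1) (by omega)⟩ *
        (sigmaMin ((Wsub i)ᵀ * X)) ^ 2)
      ≤ Real.sqrt (‖Matrix.toEuclideanLin (Xᵀ * hA.sqrt)ᵀ (u : EuclideanSpace ℝ (Fin k))‖ ^ 2) := by
        apply Real.sqrt_le_sqrt
        rw [hRHS]; exact hmain
    _ = ‖Matrix.toEuclideanLin (Xᵀ * hA.sqrt)ᵀ (u : EuclideanSpace ℝ (Fin k))‖ :=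
        Real.sqrt_sq (norm_nonneg _)
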